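/- For every integer D ≥ 1, the D × D matrix M over ℚ with entries M_{s,j} = ((j - s) mod D) + 1 (so each entry lies in {1, ..., D} and each row is a cyclic shift of the row (1, 2, ..., D)) is invertible. -/

import Mathlib

lemma stmt14_gauss (n : ℕ) :
    ∑ m : Fin n, (((m : ℕ) : ℚ) + 1) = n * (n + 1) / 2 := by
  induction n with
  | zero => simp
  | succ k ih =>
    rw [Fin.sum_univ_castSucc]
    simp only [Fin.coe_castSucc, Fin.val_last, ih]
    push_cast
    field_simp
    ring

/-- For every `D ≥ 1`, the `D × D` rational matrix with entries
`M_{s,j} = ((j - s) mod D) + 1` (each row a cyclic shift of `(1, 2, …, D)`) is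
invertible. -/
theorem stmt14 (D : ℕ) (hD : 1 ≤ D) :
    IsUnit (Matrix.of fun s j : Fin D =>
      (((((j : ℕ) + D - (s : ℕ)) % D + 1 : ℕ) : ℚ))) := by
  haveI : NeZero D := ⟨by omega⟩
  -- entries in terms of Fin subtraction
  have hval : ∀ s k : Fin D, ((k : ℕ) + D - (s : ℕ)) % D = ((k - s : Fin D) : ℕ) := by
    intro s k
    rw [Fin.sub_def]
    show _ = (D - s.val + k.val) % D
    congr 1
    omega
  set N : Matrix (Fin D) (Fin D) ℚ := Matrix.of fun k j =>
    ((if j = k + 1 then (1:ℚ) else 0) - (if j = k then 1 else 0)) / D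
      + 2 / (D^2 * (D+1)) with hN
  suffices h : (Matrix.of fun s j : Fin D =>
      (((((j : ℕ) + D - (s : ℕ)) % D + 1 : ℕ) : ℚ))) * N = 1 by
    exact isUnit_iff_exists.mpr ⟨N, h, mul_eq_one_comm.mp h⟩
  ext s j
  rw [Matrix.mul_apply, Matrix.one_apply]
  simp only [hN, Matrix.of_apply]
  have hiff : ∀ k : Fin D, (j = k + 1) ↔ (k = j - 1) := by
    intro k
    rw [eq_comm, eq_sub_iff_add_eq]
  -- expand the sum
  have expand : ∀ k : Fin D,
      ((((k : ℕ) + D - (s : ℕ)) % D + 1 : ℕ) : ℚ) *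
        (((if j = k + 1 then (1:ℚ) else 0) - (if j = k then 1 else 0)) / D
          + 2 / (D^2 * (D+1)))
      = (if k = j - 1 then ((((k : ℕ) + D - (s : ℕ)) % D + 1 : ℕ) : ℚ) else 0) / D
        - (if j = k then ((((k : ℕ) + D - (s : ℕ)) % D + 1 : ℕ) : ℚ) else 0) / D
        + (2 / (D^2 * (D+1))) * ((((k : ℕ) + D - (s : ℕ)) % D + 1 : ℕ) : ℚ) := by
    intro k
    simp only [hiff k]
    split_ifs <;> ring
  simp only [expand]
  rw [Finset.sum_add_distrib, Finset.sum_sub_distrib, ← Finset.sum_div, ← Finset.sum_div,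
    ← Finset.mul_sum, Finset.sum_ite_eq' , Finset.sum_ite_eq]
  simp only [Finset.mem_univ, if_true]
  -- row sum
  have hsum : ∑ k : Fin D, ((((k : ℕ) + D - (s : ℕ)) % D + 1 : ℕ) : ℚ)
      = D * (D + 1) / 2 := by
    have h1 : ∀ k : Fin D, ((((k : ℕ) + D - (s : ℕ)) % D + 1 : ℕ) : ℚ)
        = (((k - s : Fin D) : ℕ) : ℚ) + 1 := by
      intro k; rw [hval]; push_cast; ring
    simp only [h1]
    have hcomp := Equiv.sum_comp (Equiv.subRight s) (fun m : Fin D => ((m : ℕ) : ℚ) + 1)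
    simp only [Equiv.subRight_apply] at hcomp
    rw [hcomp]
    exact stmt14_gauss D
  rw [hsum]
  -- values at j-1 and j
  rw [hval s ((j : Fin D) - 1), hval s j]
  have hDQ : (D : ℚ) ≠ 0 := by exact_mod_cast (by omega : D ≠ 0)
  have hD1Q : (D : ℚ) + 1 ≠ 0 := by positivity
  by_cases hsj : s = j
  · subst hsj
    have ht : (s - 1 - s : Fin D) = -1 := by abel
    have ht0 : (s - s : Fin D) = 0 := by abel
    have hneg : ((-1 : Fin D) : ℕ) = D - 1 := by
      rw [Fin.neg_def]
      show (D - ((1 : Fin D) : ℕ)) % D = D - 1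
      rw [Fin.val_one']
      rcases eq_or_lt_of_le hD with h | h
      · simp [← h]
      · rw [Nat.mod_eq_of_lt h, Nat.mod_eq_of_lt (by omega)]
    rw [ht, ht0, hneg, if_pos rfl]
    simp only [Fin.val_zero]
    have hDm : D - 1 + 1 = D := by omega
    rw [hDm]
    push_cast
    field_simp
    ring
  · have htne : (j - s : Fin D) ≠ 0 := sub_ne_zero.mpr (Ne.symm hsj)
    have htv : ((j - s : Fin D) : ℕ) ≠ 0 := fun h => htne (Fin.ext h)
    have ht1 : (j - 1 - s : Fin D) = (j - s) - 1 := by abel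
    have hD2 : 2 ≤ D := by
      have := ((j - s : Fin D)).isLt
      omega
    have hone : ((1 : Fin D) : ℕ) = 1 := by
      rw [Fin.val_one']
      exact Nat.mod_eq_of_lt (by omega)
    have hv1 : ((j - s - 1 : Fin D) : ℕ) = ((j - s : Fin D) : ℕ) - 1 := by
      rw [Fin.sub_val_of_le (by rw [Fin.le_def, hone]; omega), hone]
    rw [if_neg hsj, ht1, hv1]
    have hmm : ((j - s : Fin D) : ℕ) - 1 + 1 = ((j - s : Fin D) : ℕ) := by omega
    rw [hmm]
    push_cast
    field_simp
    ring
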